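/- Let q : Z → Z' be an étale map (local homeomorphism) of topological spaces, let F' be a sheaf of k-vector spaces on Z' and let F̃ be a subsheaf of q^{-1}F'. Define Tr_q(F̃, F') as the subsheaf of F' whose sections over an open U' are those f ∈ F'(U') such that for every z' ∈ U', the germ f_{z'} lies in Σ_{z ∈ q^{-1}(z')} F̃_z (sum taken inside F'_{z'} via the canonical identification (q^{-1}F')_z ≅ F'_{q(z)}). Then for every z' ∈ Z', the germ Tr_q(F̃, F')_{z'} equals Σ_{z ∈ q^{-1}(z')} F̃_z. -/

import Mathlib

open CategoryTheory TopologicalSpace Opposite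

/-!
STATEMENT 3.  Let `q : Z → Z'` be an étale map (local homeomorphism), `F'` a sheaf of
`k`-vector spaces on `Z'`, and `F̃ ⊆ q⁻¹F'` a subsheaf.  The trace `Tr_q(F̃, F')` is the
subsheaf of `F'` whose sections over `U'` are those `f` with
`f_{z'} ∈ Σ_{z ∈ q⁻¹(z')} F̃_z` for all `z' ∈ U'` (sums of stalks inside `F'_{z'}` via the
canonical identification `(q⁻¹F')_z ≅ F'_{q z}`).  Then the stalk of `Tr_q(F̃, F')` at
any `z'` equals `Σ_{z ∈ q⁻¹(z')} F̃_z`.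

The subsheaf `F̃` of `q⁻¹F'` is encoded by the family `S z ⊆ F'_{q z}` of its stalks,
together with the characteristic property of a subsheaf of the pull-back along the étale
map `q`: every germ in `S z` is the germ of a section of `F'` on a `q`-homeomorphic
neighbourhood whose germs stay in `S` throughout the neighbourhood.
-/

noncomputable section

/-- Transport of a submodule of a stalk along an equality of base points. -/
def transportSubmodule {k : Type} [Field k] {M N : ModuleCat.{0} k} (h : M = N)
    (p : Submodule k M) : Submodule k N := h ▸ p

/-- The sum `Σ_{z ∈ q⁻¹(w)} F̃_z ⊆ F'_w` of the stalks of the subsheaf over a fibre. -/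
def traceSum {k : Type} [Field k] {Z Z' : TopCat.{0}} (q : Z ⟶ Z')
    (F' : TopCat.Presheaf (ModuleCat.{0} k) Z')
    (S : ∀ z : Z, Submodule k (F'.stalk (q z))) (w : Z') : Submodule k (F'.stalk w) :=
  ⨆ (z : Z) (h : q z = w), transportSubmodule (congrArg F'.stalk h) (S z)

lemma germ_res_apply_mod {k : Type} [Field k] {X : TopCat.{0}}
    (F : TopCat.Presheaf (ModuleCat.{0} k) X) {U V : Opens X} (i : U ⟶ V) (x : X)
    (hx : x ∈ U) (s : F.obj (op V)) :
    F.germ U x hx (F.map i.op s) = F.germ V x (i.le hx) s :=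
  F.germ_res_apply i x hx s

/-- The set of germs of global trace sections, as a submodule. -/
def traceSections {k : Type} [Field k] {Z Z' : TopCat.{0}} (q : Z ⟶ Z')
    (F' : TopCat.Presheaf (ModuleCat.{0} k) Z')
    (S : ∀ z : Z, Submodule k (F'.stalk (q z))) (z' : Z') : Submodule k (F'.stalk z') where
  carrier := {e : F'.stalk z' |
        ∃ (U' : Opens Z') (hz' : z' ∈ U') (f : F'.obj (op U')),
          F'.germ U' z' hz' f = e ∧
          ∀ (w : Z') (hw : w ∈ U'), F'.germ U' w hw f ∈ traceSum q F' S w}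
  zero_mem' := ⟨⊤, trivial, 0, by simp, fun w hw => by simp⟩
  add_mem' := by
    rintro a b ⟨U1, h1, f1, hf1, ha1⟩ ⟨U2, h2, f2, hf2, ha2⟩
    refine ⟨U1 ⊓ U2, Opens.mem_inf.mpr ⟨h1, h2⟩, F'.map (homOfLE inf_le_left).op f1 +
      F'.map (homOfLE inf_le_right).op f2, ?_, fun w hw => ?_⟩
    · rw [map_add, germ_res_apply_mod, germ_res_apply_mod, hf1, hf2]
    · rw [map_add, germ_res_apply_mod, germ_res_apply_mod]
      exact add_mem (ha1 w hw.1) (ha2 w hw.2)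
  smul_mem' := by
    rintro c a ⟨U1, h1, f1, hf1, ha1⟩
    refine ⟨U1, h1, c • f1, ?_, fun w hw => ?_⟩
    · rw [map_smul, hf1]
    · rw [map_smul]; exact Submodule.smul_mem _ c (ha1 w hw)

/-- The germs at `z'` of sections of the trace subsheaf `Tr_q(F̃, F')`
form exactly the submodule `Σ_{z ∈ q⁻¹(z')} F̃_z` of `F'_{z'}`. -/
theorem trace_subsheaf_stalk {k : Type} [Field k] {Z Z' : TopCat.{0}} (q : Z ⟶ Z')
    (hq : IsLocalHomeomorph q)
    (F' : TopCat.Presheaf (ModuleCat.{0} k) Z') (hF' : F'.IsSheaf)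
    (S : ∀ z : Z, Submodule k (F'.stalk (q z)))
    -- `S` is the family of stalks of a subsheaf `F̃` of `q⁻¹F'`:
    (hsub : ∀ (z : Z) (e : F'.stalk (q z)), e ∈ S z →
      ∃ (V : Set Z) (U' : Opens Z'), IsOpen V ∧ z ∈ V ∧ Set.BijOn q V U' ∧
        ∃ (f : F'.obj (op U')) (hz : q z ∈ U'),
          F'.germ U' (q z) hz f = e ∧
          ∀ (w : Z) (_ : w ∈ V) (hw' : q w ∈ U'), F'.germ U' (q w) hw' f ∈ S w)
    (z' : Z') :
    {e : F'.stalk z' |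
        ∃ (U' : Opens Z') (hz' : z' ∈ U') (f : F'.obj (op U')),
          F'.germ U' z' hz' f = e ∧
          ∀ (w : Z') (hw : w ∈ U'), F'.germ U' w hw f ∈ traceSum q F' S w} =
      (traceSum q F' S z' : Set (F'.stalk z')) := by
  have key : traceSum q F' S z' ≤ traceSections q F' S z' := by
    refine iSup_le fun z => iSup_le fun h => ?_
    subst h
    intro e he
    obtain ⟨V, U', hV, hzV, hbij, f, hz, hgerm, hall⟩ := hsub z e he
    refine ⟨U', hz, f, hgerm, fun w hw => ?_⟩
    obtain ⟨w0, hw0V, hw0⟩ := hbij.surjOn hw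
    have : F'.germ U' w hw f ∈
        transportSubmodule (congrArg F'.stalk hw0) (S w0) := by
      subst hw0
      exact hall w0 hw0V hw
    exact le_iSup₂ (f := fun z h => transportSubmodule (congrArg F'.stalk h) (S z)) w0 hw0 this
  apply Set.eq_of_subset_of_subset
  · rintro e ⟨U', hz', f, hf, hall⟩
    exact hf ▸ hall z' hz'
  · exact fun e he => key he


end
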